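/- Let K ∈ M_{N,n}(ℂ) be such that K σ K† is diagonal for every diagonal density matrix σ ∈ I_n. Then every column of K has at most one nonzero entry; equivalently, there exist a map σ : {1,…,n} → {1,…,N} and scalars c_1,…,c_n ∈ ℂ such that K e_j = c_j e_{σ(j)} for all j, where e_j denotes the standard basis vector. -/

import Mathlib

open scoped ENNReal ComplexOrder
open Matrix

noncomputable section

/-- The `ℓ_p` norm of a complex vector, `p ∈ [1,∞]`. -/
def lpV (p : ℝ≥0∞) {n : ℕ} (v : Fin n → ℂ) : ℝ :=
  if p = ∞ then ⨆ i, ‖v i‖ else (∑ i, ‖v i‖ ^ p.toReal) ^ (1 / p.toReal)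

/-- The `ℓ_{q,p}` norm of a complex matrix: the `ℓ_q` norm of the vector of
`ℓ_p` norms of its columns. -/
def lqp (q p : ℝ≥0∞) {m n : ℕ} (A : Matrix (Fin m) (Fin n) ℂ) : ℝ :=
  lpV q fun j => ((lpV p fun i => A i j : ℝ) : ℂ)

/-- A density matrix: positive semidefinite with trace one. -/
def IsDensity {n : ℕ} (ρ : Matrix (Fin n) (Fin n) ℂ) : Prop :=
  ρ.PosSemidef ∧ ρ.trace = 1

/-- An incoherent (classical) state: a diagonal density matrix. -/
def IsIncoherentState {n : ℕ} (ρ : Matrix (Fin n) (Fin n) ℂ) : Prop :=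
  IsDensity ρ ∧ ρ.IsDiag

/-- `C_ν(ρ) = min {ν(ρ - σ) : σ ∈ I_n}` (as an infimum). -/
def distC {n : ℕ} (ν : Matrix (Fin n) (Fin n) ℂ → ℝ) (ρ : Matrix (Fin n) (Fin n) ℂ) : ℝ :=
  sInf {x | ∃ σ, IsIncoherentState σ ∧ x = ν (ρ - σ)}

/-- A set of incoherent Kraus operators `K_j : M_{m,n}`:
`∑ K_j† K_j = I` and each `K_j σ K_j†` is diagonal for diagonal densities `σ`. -/
def IsIncoherentKraus {m n r : ℕ} (K : Fin r → Matrix (Fin m) (Fin n) ℂ) : Prop :=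
  (∑ j, (K j)ᴴ * K j) = 1 ∧
  ∀ j (σ : Matrix (Fin n) (Fin n) ℂ), IsIncoherentState σ → (K j * σ * (K j)ᴴ).IsDiag

/-- A family of candidate coherence measures, one for each dimension. -/
abbrev CFam := ∀ n : ℕ, Matrix (Fin n) (Fin n) ℂ → ℝ

/-- Condition (B1) = (C1): nonnegativity, vanishing exactly on incoherent states. -/
def CondB1 (C : CFam) : Prop :=
  ∀ n (ρ : Matrix (Fin n) (Fin n) ℂ), IsDensity ρ →
    0 ≤ C n ρ ∧ (C n ρ = 0 ↔ IsIncoherentState ρ)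

/-- Condition (B2) = (C2): monotonicity under incoherent operations. -/
def CondB2 (C : CFam) : Prop :=
  ∀ (n m r : ℕ) (K : Fin r → Matrix (Fin m) (Fin n) ℂ), IsIncoherentKraus K →
    ∀ ρ, IsDensity ρ → C m (∑ j, K j * ρ * (K j)ᴴ) ≤ C n ρ

/-- Condition (B3): monotonicity on average under selective incoherent operations. -/
def CondB3 (C : CFam) : Prop :=
  ∀ (n m r : ℕ) (K : Fin r → Matrix (Fin m) (Fin n) ℂ), IsIncoherentKraus K →
    ∀ ρ, IsDensity ρ →
      ∑ j, ((K j * ρ * (K j)ᴴ).trace).re *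
          C m (((((K j * ρ * (K j)ᴴ).trace).re)⁻¹ : ℂ) • (K j * ρ * (K j)ᴴ)) ≤ C n ρ

/-- Condition (B4): convexity. -/
def CondB4 (C : CFam) : Prop :=
  ∀ (n r : ℕ) (ρ : Fin r → Matrix (Fin n) (Fin n) ℂ) (p : Fin r → ℝ),
    (∀ j, IsDensity (ρ j)) → (∀ j, 0 ≤ p j) → (∑ j, p j) = 1 →
    C n (∑ j, (p j : ℂ) • ρ j) ≤ ∑ j, p j * C n (ρ j)

/-- Block diagonal direct sum of two square matrices, reindexed to `Fin (n₁ + n₂)`. -/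
def dirSum {n₁ n₂ : ℕ} (A : Matrix (Fin n₁) (Fin n₁) ℂ) (B : Matrix (Fin n₂) (Fin n₂) ℂ) :
    Matrix (Fin (n₁ + n₂)) (Fin (n₁ + n₂)) ℂ :=
  (Matrix.fromBlocks A 0 0 B).submatrix finSumFinEquiv.symm finSumFinEquiv.symm

/-- Condition (C3): additivity under direct sum convex combinations. -/
def CondC3 (C : CFam) : Prop :=
  ∀ (n₁ n₂ : ℕ) (ρ₁ : Matrix (Fin n₁) (Fin n₁) ℂ) (ρ₂ : Matrix (Fin n₂) (Fin n₂) ℂ)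
    (p₁ p₂ : ℝ), IsDensity ρ₁ → IsDensity ρ₂ → 0 ≤ p₁ → 0 ≤ p₂ → p₁ + p₂ = 1 →
    C (n₁ + n₂) (dirSum ((p₁ : ℂ) • ρ₁) ((p₂ : ℂ) • ρ₂)) = p₁ * C n₁ ρ₁ + p₂ * C n₂ ρ₂

/-- A norm on `M_n(ℂ)` (nonnegativity is automatic). -/
def IsMatrixNorm {n : ℕ} (ν : Matrix (Fin n) (Fin n) ℂ → ℝ) : Prop :=
  (∀ A, ν A = 0 ↔ A = 0) ∧ (∀ (c : ℂ) A, ν (c • A) = ‖c‖ * ν A) ∧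
  (∀ A B, ν (A + B) ≤ ν A + ν B)


/-- if `K ∈ M_{N,n}(ℂ)` satisfies `K σ K†` diagonal for every diagonal
density matrix `σ`, then every column of `K` has at most one nonzero entry; equivalently
(when `N ≥ 1`), `K e_j = c_j e_{f(j)}` for a map `f : {1,…,n} → {1,…,N}` and scalars `c_j`. -/
theorem kraus_columns_single_entry (N n : ℕ) (K : Matrix (Fin N) (Fin n) ℂ)
    (hK : ∀ σ : Matrix (Fin n) (Fin n) ℂ, IsIncoherentState σ → (K * σ * Kᴴ).IsDiag) :
    (∀ (j : Fin n) (i₁ i₂ : Fin N), K i₁ j ≠ 0 → K i₂ j ≠ 0 → i₁ = i₂) ∧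
    (0 < N → ∃ (f : Fin n → Fin N) (c : Fin n → ℂ),
      ∀ (j : Fin n) (i : Fin N), K i j = if i = f j then c j else 0) := by
  have key : ∀ (j : Fin n) (i₁ i₂ : Fin N), K i₁ j ≠ 0 → K i₂ j ≠ 0 → i₁ = i₂ := by
    intro j i₁ i₂ h₁ h₂
    by_contra hne
    set d : Fin n → ℂ := fun a => if a = j then 1 else 0 with hd
    have hσ : IsIncoherentState (Matrix.diagonal d) := by
      refine ⟨⟨Matrix.posSemidef_diagonal_iff.2 ?_, ?_⟩, Matrix.isDiag_diagonal d⟩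
      · intro a
        by_cases h : a = j <;> simp [hd, h]
      · simp [Matrix.trace_diagonal, hd]
    have hdiag := hK _ hσ hne
    have hentry : (K * Matrix.diagonal d * Kᴴ) i₁ i₂ = K i₁ j * star (K i₂ j) := by
      simp [Matrix.mul_apply, Matrix.diagonal, Matrix.conjTranspose_apply, hd,
        Finset.mul_sum, ite_mul, mul_ite, Finset.sum_ite_eq']
    rw [hdiag] at hentry
    rcases (by simpa [mul_eq_zero, star_eq_zero] using hentry.symm : K i₁ j = 0 ∨ K i₂ j = 0) with h|h
    exacts [h₁ h, h₂ h]
  refine ⟨key, fun hN => ?_⟩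
  classical
  refine ⟨fun j => if h : ∃ i, K i j ≠ 0 then h.choose else ⟨0, hN⟩,
    fun j => if h : ∃ i, K i j ≠ 0 then K h.choose j else 0, fun j i => ?_⟩
  by_cases h : ∃ i, K i j ≠ 0
  · simp only [dif_pos h]
    by_cases hij : i = h.choose
    · simp [hij]
    · simp only [if_neg hij]
      by_contra hKi
      exact hij (key j i h.choose hKi h.choose_spec)
  · push_neg at h
    simp [dif_neg (not_exists.mpr (fun i => not_not.mpr (h i))), h i]
end
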